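/- Let b ≥ 2 be an integer, S a non-empty finite set of primes none of which divides b, and A a subset of [0,1). If A is not dense in [0,1] and T_b(A ∩ ℚ) ⊆ A, then A contains at most finitely many S-integers, i.e., A ∩ ℤ_S is a finite set. -/

import Mathlib

/-- The map `T_b : x ↦ bx (mod 1)`, i.e. the fractional part of `bx`. -/
noncomputable def Tb (b : ℕ) (x : ℝ) : ℝ := Int.fract ((b : ℝ) * x)


/-- binomial expansion to third order -/
lemma one_add_pow_aux (n : ℕ) (x : ℤ) :
    ∃ z : ℤ, (1+x)^n = 1 + n*x + (n.choose 2)*x^2 + z*x^3 := by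
  induction n with
  | zero => exact ⟨0, by norm_num⟩
  | succ n ih =>
    obtain ⟨z, hz⟩ := ih
    refine ⟨z + z*x + (n.choose 2 : ℤ), ?_⟩
    have h2 : ((n+1).choose 2 : ℤ) = n + n.choose 2 := by
      rw [Nat.choose_succ_succ]
      push_cast [Nat.choose_one_right]
      ring
    rw [pow_succ, hz, h2]
    push_cast
    ring

def Vp (p t : ℕ) (g : ℤ) : Prop := ∃ u : ℤ, ¬ (p:ℤ) ∣ u ∧ g = 1 + u * (p:ℤ)^t

lemma Vp_step {p t : ℕ} (hp : p.Prime) (ht : 1 ≤ t) (ht2 : p = 2 → 2 ≤ t) {g : ℤ}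
    (h : Vp p t g) : Vp p (t+1) (g^p) := by
  obtain ⟨u, hu, hg⟩ := h
  obtain ⟨z, hz⟩ := one_add_pow_aux p (u * (p:ℤ)^t)
  -- tail divisible by p^(t+2)
  have hP : (0:ℤ) < (p:ℤ) := by exact_mod_cast hp.pos
  have key : ∃ w : ℤ, (p.choose 2 : ℤ)*(u*(p:ℤ)^t)^2 + z*(u*(p:ℤ)^t)^3
      = w * (p:ℤ)^(t+2) := by
    rcases eq_or_ne p 2 with h2 | h2
    · -- p = 2 : t ≥ 2, choose 2 2 = 1; 2t ≥ t+2, 3t ≥ t+2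
      have ht2' := ht2 h2
      refine ⟨(p.choose 2 : ℤ)*u^2*(p:ℤ)^(2*t-(t+2)) + z*u^3*(p:ℤ)^(3*t-(t+2)), ?_⟩
      have e1 : (p:ℤ)^(2*t) = (p:ℤ)^(2*t-(t+2)) * (p:ℤ)^(t+2) := by
        rw [← pow_add]; congr 1; omega
      have e2 : (p:ℤ)^(3*t) = (p:ℤ)^(3*t-(t+2)) * (p:ℤ)^(t+2) := by
        rw [← pow_add]; congr 1; omega
      calc (p.choose 2 : ℤ)*(u*(p:ℤ)^t)^2 + z*(u*(p:ℤ)^t)^3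
          = (p.choose 2 : ℤ)*u^2*(p:ℤ)^(2*t) + z*u^3*(p:ℤ)^(3*t) := by ring
        _ = _ := by rw [e1, e2]; ring
    · -- p odd : p ∣ choose p 2
      obtain ⟨c, hc⟩ : (p:ℤ) ∣ (p.choose 2 : ℤ) := by
        exact_mod_cast Int.natCast_dvd_natCast.mpr
          (Nat.Prime.dvd_choose_self hp (by norm_num) (by have := hp.two_le; omega))
      refine ⟨c*u^2*(p:ℤ)^(2*t+1-(t+2)) + z*u^3*(p:ℤ)^(3*t-(t+2)), ?_⟩
      have e1 : (p:ℤ)^(2*t+1) = (p:ℤ)^(2*t+1-(t+2)) * (p:ℤ)^(t+2) := by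
        rw [← pow_add]; congr 1; omega
      have e2 : (p:ℤ)^(3*t) = (p:ℤ)^(3*t-(t+2)) * (p:ℤ)^(t+2) := by
        rw [← pow_add]; congr 1; omega
      calc (p.choose 2 : ℤ)*(u*(p:ℤ)^t)^2 + z*(u*(p:ℤ)^t)^3
          = c*u^2*(p:ℤ)^(2*t+1) + z*u^3*(p:ℤ)^(3*t) := by rw [hc]; ring
        _ = _ := by rw [e1, e2]; ring
  obtain ⟨w, hw⟩ := key
  refine ⟨u + w*(p:ℤ), ?_, ?_⟩
  · intro hdvd
    exact hu (by simpa using dvd_sub hdvd (dvd_mul_left (p:ℤ) w))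
  · rw [hg, hz]
    rw [show (1:ℤ) + p*(u*(p:ℤ)^t) + (p.choose 2)*(u*(p:ℤ)^t)^2 + z*(u*(p:ℤ)^t)^3
        = 1 + u*(p:ℤ)^(t+1) + ((p.choose 2)*(u*(p:ℤ)^t)^2 + z*(u*(p:ℤ)^t)^3) by ring, hw]
    ring

lemma Vp_pow_pow {p t : ℕ} (hp : p.Prime) (ht : 1 ≤ t) (ht2 : p = 2 → 2 ≤ t) {g : ℤ}
    (h : Vp p t g) : ∀ j, Vp p (t+j) (g^(p^j)) := by
  intro j
  induction j with
  | zero => simpa using h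
  | succ j ih =>
    have h2 := Vp_step hp (by omega) (fun _ => by omega) ih
    rw [← pow_mul, ← pow_succ] at h2
    rw [show t + (j+1) = t + j + 1 by omega]
    exact h2

lemma Vp_pow_coprime {p t : ℕ} (hp : p.Prime) (ht : 1 ≤ t) {g : ℤ} (h : Vp p t g)
    {m : ℕ} (hm : ¬ p ∣ m) : Vp p t (g^m) := by
  obtain ⟨w, hw, hg⟩ := h
  have hpint : Prime (p:ℤ) := Nat.prime_iff_prime_int.mp hp
  set Ssum : ℤ := ∑ i ∈ Finset.range m, g^i with hS
  have hgeom : Ssum * (g - 1) = g^m - 1 := geom_sum_mul g m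
  have hSm : (p:ℤ) ∣ Ssum - m := by
    have : Ssum - m = ∑ i ∈ Finset.range m, (g^i - 1) := by
      rw [Finset.sum_sub_distrib, Finset.sum_const, Finset.card_range]; simp [hS]
    rw [this]
    refine Finset.dvd_sum fun i _ => ?_
    have h1 : (g - 1) ∣ g^i - 1 := by
      simpa using sub_dvd_pow_sub_pow g 1 i
    have h2 : (p:ℤ) ∣ g - 1 := by
      rw [hg]; simp only [add_sub_cancel_left]
      exact Dvd.dvd.mul_left (dvd_pow_self _ (by omega)) w
    exact h2.trans h1
  have hSnd : ¬ (p:ℤ) ∣ Ssum := by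
    intro hd
    have : (p:ℤ) ∣ (m:ℤ) := by
      have := dvd_sub hd hSm; simpa using this
    exact hm (by exact_mod_cast this)
  refine ⟨w * Ssum, fun hd => ?_, ?_⟩
  · rcases hpint.dvd_mul.mp hd with h1 | h1
    exacts [hw h1, hSnd h1]
  · have : g^m - 1 = Ssum * (w * (p:ℤ)^t) := by
      rw [← hgeom, hg]; ring_nf
    linarith [this]

lemma Vp_coverage {p t : ℕ} (hp : p.Prime) (ht : 1 ≤ t) (ht2 : p = 2 → 2 ≤ t) {g : ℤ}
    (h : Vp p t g) : ∀ k, ∀ c : ℤ, ∃ s : ℕ, (p:ℤ)^k ∣ g^s - (1 + c * (p:ℤ)^t) := by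
  intro k
  induction k with
  | zero => exact fun c => ⟨0, by simp⟩
  | succ k ih =>
    intro c
    by_cases hkt : k + 1 ≤ t
    · refine ⟨0, ?_⟩
      have : g^0 - (1 + c * (p:ℤ)^t) = -c * (p:ℤ)^t := by ring
      rw [this]
      exact Dvd.dvd.mul_left (pow_dvd_pow _ hkt) _
    · -- k ≥ t ≥ 1
      have hkt' : t ≤ k := by omega
      obtain ⟨t', rfl⟩ : ∃ t', t = t' + 1 := ⟨t - 1, by omega⟩
      obtain ⟨k', rfl⟩ : ∃ k', k = k' + 1 := ⟨k - 1, by omega⟩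
      obtain ⟨s1, hs1⟩ := ih c
      obtain ⟨d, hd⟩ := hs1
      have hVk := Vp_pow_pow hp ht ht2 h ((k'+1) - (t'+1))
      rw [show (t'+1) + ((k'+1) - (t'+1)) = k'+1 by omega] at hVk
      obtain ⟨u, hu, hgu⟩ := hVk
      -- find e : ℕ with p ∣ d + e*u
      haveI : Fact p.Prime := ⟨hp⟩
      have hune : (u : ZMod p) ≠ 0 := by
        rw [Ne, ZMod.intCast_zmod_eq_zero_iff_dvd]; exact hu
      set E : ZMod p := (-d : ℤ) * (u : ZMod p)⁻¹ with hE
      refine ⟨s1 + p^((k'+1) - (t'+1)) * E.val, ?_⟩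
      have hdvd_e : ∃ f : ℤ, d + (E.val : ℤ) * u = (p:ℤ) * f := by
        have : ((d + (E.val : ℤ) * u : ℤ) : ZMod p) = 0 := by
          push_cast
          rw [ZMod.natCast_val, ZMod.cast_id, hE]
          push_cast
          field_simp
          ring
        exact (ZMod.intCast_zmod_eq_zero_iff_dvd _ p).mp this
      obtain ⟨f, hf⟩ := hdvd_e
      set e : ℕ := E.val
      have hgs1 : g^s1 = 1 + c*(p:ℤ)^(t'+1) + (p:ℤ)^(k'+1) * ((p:ℤ)*f - (e:ℤ)*u) := by
        have hdv : d = (p:ℤ)*f - (e:ℤ)*u := by linarith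
        rw [← hdv]; linarith [hd]
      obtain ⟨z, hz⟩ := one_add_pow_aux e (u * (p:ℤ)^(k'+1))
      have hsplit : g^(s1 + p^((k'+1)-(t'+1)) * e) = g^s1 * (g^(p^((k'+1)-(t'+1))))^e := by
        rw [pow_add, pow_mul]
      refine ⟨f + c*(e:ℤ)*u*(p:ℤ)^t' + (((p:ℤ)*f - (e:ℤ)*u)*(e:ℤ)*u +
        (((e:ℕ).choose 2 : ℤ)*u^2 + z*u^3*(p:ℤ)^(k'+1)) *
          (1 + c*(p:ℤ)^(t'+1) + ((p:ℤ)*f - (e:ℤ)*u)*(p:ℤ)^(k'+1)))*(p:ℤ)^k', ?_⟩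
      rw [hsplit, hgs1, hgu, hz]
      ring

def n1fn (p : ℕ) : ℕ := if p = 2 then 2 else p - 1

def t0fn (b p : ℕ) : ℕ := (b^(n1fn p) - 1).factorization p

def Tbound (b : ℕ) (S : Finset ℕ) : ℕ :=
  S.sup (fun p => t0fn b p + (∏ r ∈ S, (r-1)).factorization p)

lemma Vp_of_nat {p N : ℕ} (hp : p.Prime) (hN : N ≠ 0) :
    Vp p (N.factorization p) (1 + (N:ℤ)) := by
  refine ⟨(ordCompl[p] N : ℕ), ?_, ?_⟩
  · exact_mod_cast fun h => (Nat.not_dvd_ordCompl hp hN) (by exact_mod_cast h)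
  · have h : ((p:ℤ)^(N.factorization p)) * (ordCompl[p] N : ℕ) = (N:ℤ) := by
      exact_mod_cast Nat.ordProj_mul_ordCompl_eq_self N p
    rw [← h]; ring

lemma fermat_dvd {b p : ℕ} (hb : 2 ≤ b) (hp : p.Prime) (hpb : ¬ p ∣ b) :
    p ∣ b^(n1fn p) - 1 := by
  have hcop : Nat.Coprime b p := ((hp.coprime_iff_not_dvd).mpr hpb).symm
  rcases eq_or_ne p 2 with h2 | h2
  · subst h2
    obtain ⟨c, rfl⟩ : ∃ c, b = 2*c+1 := by
      rcases Nat.even_or_odd b with h | h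
      · exact absurd (even_iff_two_dvd.mp h) hpb
      · exact ⟨b/2, by omega⟩
    have : (2*c+1)^(n1fn 2) = 4*(c*(c+1)) + 1 := by simp [n1fn]; ring
    rw [this]; omega
  · have := Nat.ModEq.pow_totient hcop
    rw [Nat.totient_prime hp] at this
    have h1 : (1:ℕ) ≤ b^(p-1) := Nat.one_le_pow _ _ (by omega)
    have := (Nat.modEq_iff_dvd' h1).mp this.symm
    simpa [n1fn, h2] using this

lemma key (b : ℕ) (hb : 2 ≤ b) (S : Finset ℕ) (hSp : ∀ p ∈ S, Nat.Prime p ∧ ¬ p ∣ b)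
    (q : ℕ) (hq : 2 ≤ q) (hqS : q.primeFactors ⊆ S) :
    ∃ p ∈ S, ∃ k m t : ℕ, q = p^k * m ∧ 0 < m ∧ 1 ≤ k ∧
      t ≤ Tbound b S ∧ q ≤ (p^k)^(S.card) ∧
      ∀ c : ℤ, ∃ s : ℕ, (q:ℤ) ∣ (b:ℤ)^s - (1 + c * ((p:ℤ)^t * (m:ℤ))) := by
  have hq0 : q ≠ 0 := by omega
  have hne : q.primeFactors.Nonempty := Nat.nonempty_primeFactors.mpr (by omega)
  obtain ⟨p, hpq, hpmax⟩ := Finset.exists_max_image q.primeFactors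
    (fun r => r ^ q.factorization r) hne
  have hp : p.Prime := Nat.prime_of_mem_primeFactors hpq
  have hpS : p ∈ S := hqS hpq
  have hpb : ¬ p ∣ b := (hSp p hpS).2
  set k := q.factorization p with hkdef
  set m := ordCompl[p] q with hmdef
  have hk1 : 1 ≤ k := hp.factorization_pos_of_dvd hq0 (Nat.dvd_of_mem_primeFactors hpq)
  have hqkm : q = p^k * m := (Nat.ordProj_mul_ordCompl_eq_self q p).symm
  have hm0 : 0 < m := Nat.ordCompl_pos p hq0
  have hpm : ¬ p ∣ m := Nat.not_dvd_ordCompl hp hq0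
  -- size bound
  have hsize : q ≤ (p^k)^(S.card) := by
    have h1 : q = ∏ r ∈ q.primeFactors, r ^ q.factorization r := by
      conv_lhs => rw [← Nat.factorization_prod_pow_eq_self hq0]
      rw [Finsupp.prod, Nat.support_factorization]
    calc q = ∏ r ∈ q.primeFactors, r ^ q.factorization r := h1
      _ ≤ ∏ _r ∈ q.primeFactors, p ^ k := Finset.prod_le_prod' fun r hr => hpmax r hr
      _ = (p^k)^(q.primeFactors.card) := Finset.prod_const _
      _ ≤ (p^k)^(S.card) := Nat.pow_le_pow_right (Nat.one_le_pow _ _ hp.pos)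
            (Finset.card_le_card hqS)
  -- the exponent n and valuation t
  set F : ℕ := ∏ r ∈ S, (r-1) with hFdef
  set G : ℕ := ∏ r ∈ S.erase p, r^q with hGdef
  set E : ℕ := F * G with hEdef
  have hF0 : F ≠ 0 := by
    rw [hFdef]
    exact Finset.prod_ne_zero_iff.mpr fun r hr => by have := (hSp r hr).1.two_le; omega
  have hG0 : G ≠ 0 := by
    rw [hGdef]
    exact Finset.prod_ne_zero_iff.mpr fun r hr =>
      pow_ne_zero _ (by have := (hSp r (Finset.mem_of_mem_erase hr)).1.two_le; omega)
  have hE0 : E ≠ 0 := mul_ne_zero hF0 hG0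
  have hpG : ¬ p ∣ G := by
    intro hd
    obtain ⟨r, hr, hrd⟩ := hp.prime.exists_mem_finset_dvd hd
    have hr' : r ∈ S.erase p := hr
    have : p ∣ r := hp.dvd_of_dvd_pow hrd
    have hrp : r.Prime := (hSp r (Finset.mem_of_mem_erase hr')).1
    have : p = r := (Nat.prime_dvd_prime_iff_eq hp hrp).mp this
    exact (Finset.ne_of_mem_erase hr') this.symm
  set n : ℕ := n1fn p * E with hndef
  -- t0 data
  have hn1 : 1 ≤ n1fn p := by
    have := hp.two_le
    unfold n1fn; split <;> omega
  have hN0 : b^(n1fn p) - 1 ≠ 0 := by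
    have : 2 ≤ b^(n1fn p) := le_trans hb (Nat.le_self_pow (by omega) b)
    omega
  have hVb : Vp p (t0fn b p) ((b:ℤ)^(n1fn p)) := by
    have h := Vp_of_nat hp hN0
    have h1 : 1 ≤ b^(n1fn p) := Nat.one_le_pow _ _ (by omega)
    have hcast : (1 : ℤ) + ((b^(n1fn p) - 1 : ℕ) : ℤ) = (b:ℤ)^(n1fn p) := by
      rw [Nat.cast_sub h1]; push_cast; ring
    rw [hcast] at h
    exact h
  have ht01 : 1 ≤ t0fn b p := hp.factorization_pos_of_dvd hN0 (fermat_dvd hb hp hpb)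
  have ht02 : p = 2 → 2 ≤ t0fn b p := by
    intro h2
    subst h2
    obtain ⟨c, rfl⟩ : ∃ c, b = 2*c+1 := by
      rcases Nat.even_or_odd b with h | h
      · exact absurd (even_iff_two_dvd.mp h) hpb
      · exact ⟨b/2, by omega⟩
    have hn1fn2 : n1fn 2 = 2 := by norm_num [n1fn]
    have hsq : (2*c+1)^(n1fn 2) = 4*(c*(c+1)) + 1 := by
      rw [hn1fn2]; ring
    have h4 : 2^2 ∣ (2*c+1)^(n1fn 2) - 1 := by rw [hsq]; omega
    exact (Nat.Prime.pow_dvd_iff_le_factorization hp hN0).mp h4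
  set j : ℕ := E.factorization p with hjdef
  have hVn : Vp p (t0fn b p + j) ((b:ℤ)^n) := by
    have hdecomp : E = p^j * (ordCompl[p] E) := (Nat.ordProj_mul_ordCompl_eq_self E p).symm
    have hu : ¬ p ∣ ordCompl[p] E := Nat.not_dvd_ordCompl hp hE0
    have h1 := Vp_pow_pow hp ht01 ht02 hVb j
    have h2 := Vp_pow_coprime hp (by omega) h1 hu
    rw [← pow_mul, ← pow_mul] at h2
    have hexp : n = n1fn p * (p^j * (ordCompl[p] E)) := by
      rw [hndef]; conv_lhs => rw [hdecomp]
    rw [hexp]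
    exact h2
  have hjF : j = F.factorization p := by
    rw [hjdef, hEdef, Nat.factorization_mul hF0 hG0]
    simp [Nat.factorization_eq_zero_of_not_dvd hpG]
  have htT : t0fn b p + j ≤ Tbound b S := by
    rw [hjF, hFdef]
    unfold Tbound
    exact Finset.le_sup (f := fun p => t0fn b p + (∏ r ∈ S, (r-1)).factorization p) hpS
  -- Euler part : m ∣ b^n - 1
  have hn0 : n ≠ 0 := by
    have : E ≠ 0 := hE0
    simp only [hndef]
    positivity
  have hbn1 : 1 ≤ b^n := Nat.one_le_pow _ _ (by omega)
  have hbn0 : b^n - 1 ≠ 0 := by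
    have : 2 ≤ b^n := le_trans hb (Nat.le_self_pow hn0 b)
    omega
  have hmq : m ∣ q := ⟨p^k, by rw [hqkm]; ring⟩
  have hEuler : m ∣ b^n - 1 := by
    rw [← Nat.factorization_le_iff_dvd (by omega) hbn0, Finsupp.le_def]
    intro r
    by_cases hrm : m.factorization r = 0
    · simp [hrm]
    · have hrsup : r ∈ m.primeFactors := by
        rw [← Nat.support_factorization]; exact Finsupp.mem_support_iff.mpr hrm
      have hr : r.Prime := Nat.prime_of_mem_primeFactors hrsup
      have hrdm : r ∣ m := Nat.dvd_of_mem_primeFactors hrsup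
      have hrS : r ∈ S := hqS (Nat.primeFactors_mono hmq hq0 hrsup)
      have hrp : r ≠ p := fun h => hpm (h ▸ hrdm)
      set kr := m.factorization r with hkr
      have hkr0 : 0 < kr := by omega
      have hrkq : r^kr ∣ q := (Nat.ordProj_dvd m r).trans hmq
      have hkrq : kr ≤ q := by
        have h1 : r^kr ≤ q := Nat.le_of_dvd (by omega) hrkq
        have h2 : 2^kr ≤ r^kr := Nat.pow_le_pow_left hr.two_le kr
        have h3 : kr < 2^kr := Nat.lt_two_pow_self
        omega
      have hphi : (r^kr).totient = r^(kr-1) * (r-1) := Nat.totient_prime_pow hr hkr0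
      have hphiE : (r^kr).totient ∣ E := by
        rw [hphi, hEdef]
        have h1 : (r-1) ∣ F := by rw [hFdef]; exact Finset.dvd_prod_of_mem _ hrS
        have h2 : r^(kr-1) ∣ G := by
          rw [hGdef]
          exact dvd_trans (pow_dvd_pow r (by omega)) (Finset.dvd_prod_of_mem _
            (Finset.mem_erase.mpr ⟨hrp, hrS⟩))
        have := mul_dvd_mul h2 h1
        rwa [mul_comm F G]
      have hphin : (r^kr).totient ∣ n := by
        rw [hndef]; exact Dvd.dvd.mul_left hphiE _
      have hbcop : Nat.Coprime b (r^kr) :=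
        Nat.Coprime.pow_right kr ((hr.coprime_iff_not_dvd.mpr (hSp r hrS).2).symm)
      obtain ⟨cdiv, hcdiv⟩ := hphin
      have heu : b^n ≡ 1 [MOD r^kr] := by
        rw [hcdiv, pow_mul]
        calc (b^((r^kr).totient))^cdiv ≡ 1^cdiv [MOD r^kr] :=
              Nat.ModEq.pow cdiv (Nat.ModEq.pow_totient hbcop)
          _ = 1 := one_pow cdiv
      have hdvd : r^kr ∣ b^n - 1 := (Nat.modEq_iff_dvd' hbn1).mp heu.symm
      exact (hr.pow_dvd_iff_le_factorization hbn0).mp hdvd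
  -- final coverage
  refine ⟨p, hpS, k, m, t0fn b p + j, hqkm, hm0, hk1, htT, hsize, ?_⟩
  intro c
  obtain ⟨s, hs⟩ := Vp_coverage hp (by omega) (fun h2 => by have := ht02 h2; omega) hVn k (c * m)
  refine ⟨n * s, ?_⟩
  rw [pow_mul]
  have hdp : ((p:ℤ))^k ∣ ((b:ℤ)^n)^s - (1 + c * ((p:ℤ)^(t0fn b p + j) * (m:ℤ))) := by
    have he : (1 : ℤ) + c * (m:ℤ) * (p:ℤ)^(t0fn b p + j)
        = 1 + c * ((p:ℤ)^(t0fn b p + j) * (m:ℤ)) := by ring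
    rw [← he]; exact hs
  have hdm : (m:ℤ) ∣ ((b:ℤ)^n)^s - (1 + c * ((p:ℤ)^(t0fn b p + j) * (m:ℤ))) := by
    have h1 : (m:ℤ) ∣ ((b:ℤ)^n)^s - 1 := by
      have hx : ((b:ℤ)^n - 1) ∣ ((b:ℤ)^n)^s - 1 := by
        simpa using sub_dvd_pow_sub_pow ((b:ℤ)^n) 1 s
      refine dvd_trans ?_ hx
      have hc2 : ((b^n - 1 : ℕ) : ℤ) = (b:ℤ)^n - 1 := by
        rw [Nat.cast_sub hbn1]; push_cast; ring
      rw [← hc2]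
      exact_mod_cast hEuler
    have h2 : (m:ℤ) ∣ c * ((p:ℤ)^(t0fn b p + j) * (m:ℤ)) := ⟨c * (p:ℤ)^(t0fn b p + j), by ring⟩
    have h3 := dvd_sub h1 h2
    have he : ((b:ℤ)^n)^s - 1 - c * ((p:ℤ)^(t0fn b p + j) * (m:ℤ))
        = ((b:ℤ)^n)^s - (1 + c * ((p:ℤ)^(t0fn b p + j) * (m:ℤ))) := by ring
    rwa [he] at h3
  have hcop : IsCoprime ((p:ℤ)^k) ((m:ℤ)) := by
    have : Nat.Coprime (p^k) m := (Nat.coprime_ordCompl hp hq0).pow_left k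
    have h := Nat.isCoprime_iff_coprime.mpr this
    push_cast at h
    exact h
  have hfin := hcop.mul_dvd hdp hdm
  have hqc : (q:ℤ) = (p:ℤ)^k * (m:ℤ) := by rw [hqkm]; push_cast; ring
  rw [hqc]
  exact hfin

lemma fract_mul_fract (b : ℕ) (y : ℝ) :
    Int.fract ((b:ℝ) * Int.fract y) = Int.fract ((b:ℝ) * y) := by
  have h : (b:ℝ) * Int.fract y = (b:ℝ)*y - ((b:ℤ)*⌊y⌋ : ℤ) := by
    rw [Int.fract]; push_cast; ring
  rw [h, Int.fract_sub_intCast]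

lemma ratCast_fract (s : ℚ) : ((Int.fract s : ℚ) : ℝ) = Int.fract (s : ℝ) := by
  rw [Int.fract, Int.fract]
  push_cast [Rat.floor_cast]
  ring

lemma orbit_mem (b : ℕ) (A : Set ℝ) (hA : A ⊆ Set.Ico 0 1)
    (hT : ∀ x ∈ A, (∃ q : ℚ, (q : ℝ) = x) → Tb b x ∈ A)
    {x : ℝ} (hx : x ∈ A) (r : ℚ) (hr : (r:ℝ) = x) :
    ∀ j : ℕ, Int.fract ((b:ℝ)^j * x) ∈ A := by
  have main : ∀ j, Int.fract ((b:ℝ)^j * x) ∈ A ∧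
      ∃ s : ℚ, (s:ℝ) = Int.fract ((b:ℝ)^j * x) := by
    intro j
    induction j with
    | zero =>
      simp only [pow_zero, one_mul]
      rw [Int.fract_eq_self.mpr ⟨(hA hx).1, (hA hx).2⟩]
      exact ⟨hx, r, hr⟩
    | succ j ih =>
      obtain ⟨hmem, s, hs⟩ := ih
      have h1 : Tb b (Int.fract ((b:ℝ)^j * x)) ∈ A := hT _ hmem ⟨s, hs⟩
      have h2 : Tb b (Int.fract ((b:ℝ)^j * x)) = Int.fract ((b:ℝ)^(j+1) * x) := by
        unfold Tb
        rw [fract_mul_fract, ← mul_assoc, ← pow_succ']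
      rw [h2] at h1
      refine ⟨h1, Int.fract ((b:ℚ) * s), ?_⟩
      rw [ratCast_fract, ← h2]
      unfold Tb
      rw [← hs]
      push_cast
      rfl
  exact fun j => (main j).1

lemma finite_den_le (D : ℕ) :
    {x : ℝ | ∃ r : ℚ, (r:ℝ) = x ∧ r.den ≤ D ∧ 0 ≤ r ∧ r < 1}.Finite := by
  have hfin : (Set.Iic D ×ˢ Set.Iic D).Finite := (Set.finite_Iic D).prod (Set.finite_Iic D)
  apply Set.Finite.subset (hfin.image (fun nd : ℕ × ℕ => (nd.1 : ℝ)/(nd.2 : ℝ)))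
  rintro x ⟨r, hrx, hden, hr0, hr1⟩
  refine ⟨(r.num.toNat, r.den), ⟨?_, hden⟩, ?_⟩
  · have h1 : r.num < r.den := Rat.lt_one_iff_num_lt_denom.mpr hr1
    simp only [Set.mem_Iic]
    omega
  · have hnum : (r.num.toNat : ℤ) = r.num := Int.toNat_of_nonneg (Rat.num_nonneg.mpr hr0)
    simp only
    rw [← hrx, Rat.cast_def]
    congr 1
    exact_mod_cast congrArg (fun z : ℤ => (z : ℝ)) hnum

lemma avoided (A : Set ℝ) (hAnd : ¬ Set.Icc (0:ℝ) 1 ⊆ closure A) :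
    ∃ c0 ε0 : ℝ, 0 < ε0 ∧ 0 ≤ c0 ∧ c0 + ε0 ≤ 1 ∧
      ∀ z ∈ A, ¬(c0 ≤ z ∧ z ≤ c0 + ε0) := by
  obtain ⟨y, hy, hyA⟩ := Set.not_subset.mp hAnd
  obtain ⟨ε, hε, hball⟩ := Metric.isOpen_iff.mp (isOpen_compl_iff.mpr isClosed_closure) y hyA
  obtain ⟨hy0, hy1⟩ := hy
  set η := min (ε/2) 1 with hηdef
  have hη0 : 0 < η := lt_min (by linarith) one_pos
  have hηε : η ≤ ε/2 := min_le_left _ _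
  have hη1 : η ≤ 1 := min_le_right _ _
  set c0 := min (max (y - η/2) 0) (1 - η/2) with hc0def
  have hlb : y - η/2 ≤ c0 :=
    le_min (le_max_left _ _) (by linarith)
  have hub : c0 ≤ y + η/2 :=
    le_trans (min_le_left _ _) (max_le (by linarith) (by linarith))
  refine ⟨c0, η/2, by linarith, ?_, ?_, ?_⟩
  · exact le_min (le_max_right _ _) (by linarith)
  · have := min_le_right (max (y - η/2) 0) (1 - η/2); linarith
  · rintro z hz ⟨hz1, hz2⟩
    have hin : z ∈ Metric.ball y ε := by
      rw [Metric.mem_ball, Real.dist_eq, abs_sub_lt_iff]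
      constructor <;> linarith
    exact hball hin (subset_closure hz)

theorem stmt0 (b : ℕ) (hb : 2 ≤ b) (S : Finset ℕ) (hS : S.Nonempty)
    (hSp : ∀ p ∈ S, Nat.Prime p ∧ ¬ p ∣ b)
    (A : Set ℝ) (hA : A ⊆ Set.Ico 0 1)
    (hAnd : ¬ Set.Icc (0 : ℝ) 1 ⊆ closure A)
    (hT : ∀ x ∈ A, (∃ q : ℚ, (q : ℝ) = x) → Tb b x ∈ A) :
    {x ∈ A | ∃ q : ℚ, (q : ℝ) = x ∧ ∀ p : ℕ, p.Prime → p ∣ q.den → p ∈ S}.Finite := by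
  obtain ⟨c0, ε0, hε0, hc00, hc01, havoid⟩ := avoided A hAnd
  set T := Tbound b S with hTdef
  set M := S.sup (fun p => p^T) with hMdef
  obtain ⟨D, hD⟩ := exists_nat_ge (((M:ℝ)/ε0)^(S.card))
  apply Set.Finite.subset (finite_den_le (max D 1))
  rintro x ⟨hxA, r, hrx, hrS⟩
  have hx01 := hA hxA
  rw [← hrx] at hx01
  have hr0 : 0 ≤ r := by exact_mod_cast hx01.1
  have hr1 : r < 1 := by exact_mod_cast hx01.2
  refine ⟨r, hrx, ?_, hr0, hr1⟩
  by_contra hden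
  push_neg at hden
  set q := r.den with hqdef
  have hq2 : 2 ≤ q := by omega
  have hqD : D < q := by omega
  have hqS : q.primeFactors ⊆ S := fun pp hpp =>
    hrS pp (Nat.prime_of_mem_primeFactors hpp) (Nat.dvd_of_mem_primeFactors hpp)
  obtain ⟨p, hpS, k, m, t, hqkm, hm0, hk1, htT, hsize, hcov⟩ := key b hb S hSp q hq2 hqS
  have hp2 : 2 ≤ p := ((hSp p hpS).1).two_le
  have hq0R : (0:ℝ) < q := by positivity
  have hptM : ((p:ℝ))^t ≤ (M:ℝ) := by
    have h1 : p^t ≤ p^T := Nat.pow_le_pow_right (by omega) htT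
    have h2 : p^T ≤ M := Finset.le_sup (f := fun p => p^T) hpS
    exact_mod_cast h1.trans h2
  have hcard0 : S.card ≠ 0 := Finset.card_ne_zero_of_mem hpS
  have hkey : (M:ℝ)/ε0 < (p:ℝ)^k := by
    apply lt_of_pow_lt_pow_left₀ S.card (by positivity)
    calc ((M:ℝ)/ε0)^S.card ≤ D := hD
      _ < q := by exact_mod_cast hqD
      _ ≤ ((p^k : ℕ):ℝ)^S.card := by exact_mod_cast hsize
      _ = ((p:ℝ)^k)^S.card := by push_cast; ring
  have hm0R : (0:ℝ) < (m:ℝ) := by exact_mod_cast hm0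
  have hdlt : ((p:ℝ)^t * m) < ε0 * q := by
    have h1 : (M:ℝ) < ε0 * (p:ℝ)^k := by
      rw [div_lt_iff₀ hε0] at hkey; linarith
    have h2 : (p:ℝ)^t < ε0 * (p:ℝ)^k := lt_of_le_of_lt hptM h1
    have h3 : (p:ℝ)^t * m < (ε0 * (p:ℝ)^k) * m := mul_lt_mul_of_pos_right h2 hm0R
    have h4 : ((q:ℕ):ℝ) = (p:ℝ)^k * m := by rw [hqkm]; push_cast; ring
    rw [h4]; linarith
  set a := r.num with hadef
  have ha0 : 0 ≤ a := Rat.num_nonneg.mpr hr0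
  have hcop : IsCoprime (a:ℤ) ((q:ℕ):ℤ) := by
    rw [Int.isCoprime_iff_gcd_eq_one]
    simpa [Int.gcd] using r.reduced
  obtain ⟨u, v, huv⟩ := hcop
  set dI : ℤ := (p:ℤ)^t * (m:ℤ) with hdIdef
  have hdI0 : (0:ℤ) < dI := by positivity
  have hdR0 : (0:ℝ) < (dI:ℝ) := by exact_mod_cast hdI0
  have hdIR : (dI:ℝ) = (p:ℝ)^t * (m:ℝ) := by rw [hdIdef]; push_cast; ring
  set L : ℤ := ⌈(c0 * q - (a:ℝ))/(dI:ℝ)⌉ with hLdef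
  set N : ℤ := a + dI * L with hNdef
  have hNlb : c0 * q ≤ (N:ℝ) := by
    have hle := Int.le_ceil ((c0 * q - (a:ℝ))/(dI:ℝ))
    rw [div_le_iff₀ hdR0] at hle
    have : (N:ℝ) = (a:ℝ) + (dI:ℝ) * (L:ℝ) := by rw [hNdef]; push_cast; ring
    rw [this]
    nlinarith [hle]
  have hNub : (N:ℝ) < c0*q + dI := by
    have hlt := Int.ceil_lt_add_one ((c0 * q - (a:ℝ))/(dI:ℝ))
    have : (N:ℝ) = (a:ℝ) + (dI:ℝ) * (L:ℝ) := by rw [hNdef]; push_cast; ring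
    rw [this]
    have h2 : (dI:ℝ) * (L:ℝ) < (dI:ℝ) * ((c0 * q - (a:ℝ))/(dI:ℝ) + 1) :=
      mul_lt_mul_of_pos_left hlt hdR0
    rw [mul_add, mul_div_cancel₀ _ (ne_of_gt hdR0)] at h2
    linarith
  have hN0 : 0 ≤ N := by
    have : (0:ℝ) ≤ (N:ℝ) := le_trans (by positivity) hNlb
    exact_mod_cast this
  have hNq : N < (q:ℤ) := by
    have : (N:ℝ) < (q:ℝ) := by
      have h5 : (N:ℝ) < c0*q + ε0*q := by rw [hdIR] at hNub; linarith
      nlinarith [hq0R]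
    exact_mod_cast this
  obtain ⟨s, hs⟩ := hcov (L * u)
  obtain ⟨w, hw⟩ := hs
  have hqdvd : ((q:ℕ):ℤ) ∣ a * (b:ℤ)^s - N := by
    refine ⟨a*w - L*dI*v, ?_⟩
    rw [hNdef]
    linear_combination a * hw + dI * L * huv
  have horbit := orbit_mem b A hA hT hxA r hrx s
  have hxval : x = (a:ℝ)/(q:ℝ) := by
    rw [← hrx, Rat.cast_def]
  have hfr : Int.fract ((b:ℝ)^s * x) = (N:ℝ)/(q:ℝ) := by
    have h1 : (b:ℝ)^s * x = (((b:ℤ)^s * a : ℤ):ℝ)/((q:ℕ):ℝ) := by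
      rw [hxval]; push_cast; ring
    rw [h1, Int.fract_div_intCast_eq_div_intCast_mod]
    congr 1
    have hmodeq : ((b:ℤ)^s * a) % ((q:ℕ):ℤ) = N % ((q:ℕ):ℤ) := by
      have hd : ((q:ℕ):ℤ) ∣ N - (b:ℤ)^s * a := by
        obtain ⟨W, hW⟩ := hqdvd
        exact ⟨-W, by linear_combination -hW⟩
      exact Int.modEq_iff_dvd.mpr hd
    rw [hmodeq, Int.emod_eq_of_lt hN0 hNq]
  rw [hfr] at horbit
  refine havoid _ horbit ⟨?_, ?_⟩
  · rw [le_div_iff₀ hq0R]; linarith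
  · rw [div_le_iff₀ hq0R]
    rw [hdIR] at hNub
    nlinarith [hdlt]
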